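/- Let H(t) be a continuous family of self-adjoint elements of a C*-algebra and suppose P(t) solves the ordinary differential equation i P′(t) = [H(t), P(t)] with P(0)² = P(0) and P(0)* = P(0). Then P(t)² = P(t) and P(t)* = P(t) for all t. -/

import Mathlib

lemma aux_nonneg {E : Type*} [NormedAddCommGroup E] [NormedSpace ℝ E] {Q Q' : ℝ → E} {K : ℝ → ℝ}
    (hd : ∀ t, HasDerivAt Q (Q' t) t) (hK : Continuous K)
    (hb : ∀ t, ‖Q' t‖ ≤ K t * ‖Q t‖) (h0 : Q 0 = 0) : ∀ t ≥ 0, Q t = 0 := by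
  intro t ht
  obtain ⟨C, hC⟩ := (isCompact_Icc (a := (0:ℝ)) (b := t)).exists_bound_of_continuousOn
    hK.continuousOn
  set C' := max C 0 with hC'
  have h := norm_le_gronwallBound_of_norm_deriv_right_le (δ := 0) (K := C') (ε := 0)
    (a := 0) (b := t)
    ((continuous_iff_continuousAt.2 fun x => (hd x).continuousAt).continuousOn)
    (fun x _ => (hd x).hasDerivWithinAt)
    (by simp [h0])
    (fun x hx => by
      have h1 : K x ≤ C' := le_trans (le_trans (le_abs_self _) (hC x (Set.Ico_subset_Icc_self hx))) (le_max_left _ _)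
      calc ‖Q' x‖ ≤ K x * ‖Q x‖ := hb x
        _ ≤ C' * ‖Q x‖ := mul_le_mul_of_nonneg_right h1 (norm_nonneg _)
        _ = C' * ‖Q x‖ + 0 := by ring)
  have := h t (by simp [ht])
  rw [gronwallBound_ε0_δ0] at this
  simpa using norm_le_zero_iff.1 this

lemma aux_zero {E : Type*} [NormedAddCommGroup E] [NormedSpace ℝ E] {Q Q' : ℝ → E} {K : ℝ → ℝ}
    (hd : ∀ t, HasDerivAt Q (Q' t) t) (hK : Continuous K)
    (hb : ∀ t, ‖Q' t‖ ≤ K t * ‖Q t‖) (h0 : Q 0 = 0) : ∀ t, Q t = 0 := by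
  intro t
  rcases le_or_gt 0 t with ht | ht
  · exact aux_nonneg hd hK hb h0 t ht
  · have hd' : ∀ s : ℝ, HasDerivAt (fun x => Q (-x)) ((-1 : ℝ) • Q' (-s)) s := fun s =>
      (hd (-s)).scomp s (hasDerivAt_neg s)
    have := aux_nonneg (Q := fun x => Q (-x)) (Q' := fun s => (-1 : ℝ) • Q' (-s))
      (K := fun s => K (-s)) hd' (hK.comp continuous_neg)
      (fun s => by simpa using hb (-s)) (by simpa using h0) (-t) (by linarith)
    simpa using this

/-- solutions of iP′ = [H, P] with idempotent self-adjoint initial condition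
remain idempotent and self-adjoint for all times. -/
theorem stmt12 {A : Type*} [NormedRing A] [StarRing A] [CStarRing A]
    [NormedAlgebra ℂ A] [CompleteSpace A] [StarModule ℂ A]
    (Hm P P' : ℝ → A)
    (hHcont : Continuous Hm) (hHsa : ∀ t, star (Hm t) = Hm t)
    (hderiv : ∀ t, HasDerivAt P (P' t) t)
    (hode : ∀ t, Complex.I • P' t = Hm t * P t - P t * Hm t)
    (h0idem : P 0 * P 0 = P 0) (h0sa : star (P 0) = P 0) :
    ∀ t, P t * P t = P t ∧ star (P t) = P t := by
  haveI : StarModule ℝ A := ⟨fun r a => by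
    rw [← Complex.coe_smul, star_smul, ← Complex.coe_smul]
    simp⟩
  have hK : Continuous (fun t => 2 * ‖Hm t‖) := continuous_const.mul hHcont.norm
  have hP' : ∀ t, P' t = (-Complex.I) • (Hm t * P t - P t * Hm t) := by
    intro t
    rw [← hode t, smul_smul]
    simp [Complex.I_mul_I]
  have hnorm : ∀ (X : A) (t : ℝ), ‖(-Complex.I) • (Hm t * X - X * Hm t)‖ ≤ 2 * ‖Hm t‖ * ‖X‖ := by
    intro X t
    rw [norm_smul]
    simp only [norm_neg, Complex.norm_I, one_mul]
    calc ‖Hm t * X - X * Hm t‖ ≤ ‖Hm t * X‖ + ‖X * Hm t‖ := norm_sub_le _ _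
      _ ≤ ‖Hm t‖ * ‖X‖ + ‖X‖ * ‖Hm t‖ := add_le_add (norm_mul_le _ _) (norm_mul_le _ _)
      _ = 2 * ‖Hm t‖ * ‖X‖ := by ring
  -- idempotency
  have hQ : ∀ t, P t * P t - P t = 0 := by
    refine aux_zero (Q' := fun t => (-Complex.I) • (Hm t * (P t * P t - P t) - (P t * P t - P t) * Hm t))
      (K := fun t => 2 * ‖Hm t‖) (fun t => ?_) hK (fun t => hnorm _ t) (by simp [h0idem])
    have h1 : HasDerivAt (fun t => P t * P t - P t) (P' t * P t + P t * P' t - P' t) t :=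
      ((hderiv t).mul (hderiv t)).sub (hderiv t)
    convert h1 using 1
    case e'_4 => rfl
    rw [hP']
    simp only [smul_mul_assoc, mul_smul_comm, ← smul_add, ← smul_sub]
    congr 1
    noncomm_ring
  -- self-adjointness
  have hstarP' : ∀ t, star (P' t) = (-Complex.I) • (Hm t * star (P t) - star (P t) * Hm t) := by
    intro t
    rw [hP', star_smul, star_sub, star_mul, star_mul, hHsa]
    rw [show star (-Complex.I) = Complex.I by simp, neg_smul, ← smul_neg, neg_sub]
  have hR : ∀ t, star (P t) - P t = 0 := by
    refine aux_zero (Q' := fun t => (-Complex.I) • (Hm t * (star (P t) - P t) - (star (P t) - P t) * Hm t))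
      (K := fun t => 2 * ‖Hm t‖) (fun t => ?_) hK (fun t => hnorm _ t) (by simp [h0sa])
    have h1 : HasDerivAt (fun t => star (P t) - P t) (star (P' t) - P' t) t :=
      (hderiv t).star.sub (hderiv t)
    convert h1 using 1
    case e'_4 => rfl
    rw [hstarP', hP', ← smul_sub]
    noncomm_ring
  exact fun t => ⟨by have := hQ t; linear_combination (norm := abel1) this,
    by have := hR t; linear_combination (norm := abel1) this⟩
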